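/- Let G be a group with finite symmetric generating set X = {x₀, x₀⁻¹} ∪ Y. If there is a constant k such that every geodesic word over X contains at most k letters from Y, then the geodesic growth of G with respect to X is polynomial: Γ_{G,X}(n) ≤ C·n^{k+1} for some constant C depending only on k and |Y|. -/

import Mathlib

/-- A word `w` over the alphabet `X ⊆ G` is geodesic if its letters lie in `X` and no
shorter word over `X` represents the same element of `G`. -/
def IsGeodesicWord {G : Type*} [Group G] (X : Set G) (w : List G) : Prop :=
  (∀ a ∈ w, a ∈ X) ∧
    ∀ w' : List G, (∀ a ∈ w', a ∈ X) → w'.prod = w.prod → w.length ≤ w'.length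

/-- The geodesic growth function: the number of geodesic words over `X` of length at most `n`. -/
noncomputable def geodesicGrowth {G : Type*} [Group G] (X : Set G) (n : ℕ) : ℕ :=
  Set.ncard {w : List G | IsGeodesicWord X w ∧ w.length ≤ n}

/-- The word growth function: the number of elements of `G` represented by some word over `X`
of length at most `n`. -/
noncomputable def wordGrowth {G : Type*} [Group G] (X : Set G) (n : ℕ) : ℕ :=
  Set.ncard {g : G | ∃ w : List G, (∀ a ∈ w, a ∈ X) ∧ w.prod = g ∧ w.length ≤ n}

section Aux

variable {G : Type*} [Group G] [DecidableEq G]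

/-- The list of (position, letter) pairs of `Y`-letters in `w`. -/
def Fw (Y : Finset G) (w : List G) : List (ℕ × G) :=
  (w.zipIdx.map Prod.swap).filter (fun p => decide (p.2 ∈ Y))

/-- The position right after the `j`-th `Y`-letter (`0` for `j = 0`). -/
def startIdx (Y : Finset G) (w : List G) : ℕ → ℕ
  | 0 => 0
  | (j+1) => ((Fw Y w)[j]?.map (fun p => p.1 + 1)).getD w.length

/-- The code of a word: its length, its `Y`-letters with positions, and the first letter
of each maximal `x₀^±`-block (as a Boolean). -/
def code (x₀ : G) (Y : Finset G) (k : ℕ) (w : List G) :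
    ℕ × (Fin k → Option (ℕ × G)) × (Fin (k+1) → Bool) :=
  (w.length, fun i => (Fw Y w)[(i : ℕ)]?,
    fun i => decide (w.getD (startIdx Y w i) 1 = x₀))

lemma Fw_length (Y : Finset G) (w : List G) :
    (Fw Y w).length = w.countP (fun g => decide (g ∈ Y)) := by
  rw [List.countP_eq_length_filter]
  conv_rhs => rw [← List.zipIdx_map_fst 0 w, show (Prod.fst : G × ℕ → G) = Prod.snd ∘ Prod.swap from rfl, ← List.map_map, List.filter_map]
  rw [List.length_map]
  rfl

lemma mem_Fw {Y : Finset G} {w : List G} {i : ℕ} {a : G} :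
    (i, a) ∈ Fw Y w ↔ (w[i]? = some a ∧ a ∈ Y) := by
  simp [Fw, List.mem_filter, List.mk_mem_zipIdx_iff_getElem?]

lemma letterCases (x₀ : G) (Y : Finset G) {a : G}
    (ha : a ∈ (insert x₀ (insert x₀⁻¹ Y) : Finset G)) (hY : a ∉ Y) :
    a = x₀ ∨ a = x₀⁻¹ := by
  simp only [Finset.mem_insert] at ha
  tauto

lemma letter_det (x₀ : G) (Y : Finset G) {a b : G}
    (ha : a ∈ (insert x₀ (insert x₀⁻¹ Y) : Finset G)) (haY : a ∉ Y)
    (hb : b ∈ (insert x₀ (insert x₀⁻¹ Y) : Finset G)) (hbY : b ∉ Y)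
    (h : decide (a = x₀) = decide (b = x₀)) : a = b := by
  by_cases hax : a = x₀
  · have : decide (b = x₀) = true := by rw [← h]; simp [hax]
    simp only [decide_eq_true_eq] at this
    rw [hax, this]
  · have hbx : ¬ b = x₀ := by
      intro hbx
      apply hax
      have : decide (a = x₀) = true := by rw [h]; simp [hbx]
      simpa using this
    rw [(letterCases x₀ Y ha haY).resolve_left hax,
      (letterCases x₀ Y hb hbY).resolve_left hbx]

lemma geo_adj (x₀ : G) (Y : Finset G) {w : List G}
    (hw : IsGeodesicWord ((insert x₀ (insert x₀⁻¹ Y) : Finset G) : Set G) w)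
    {i : ℕ} (h : i + 1 < w.length)
    (h1 : w[i]'(Nat.lt_of_succ_lt h) ∉ Y) (h2 : w[i+1]'h ∉ Y) :
    w[i]'(Nat.lt_of_succ_lt h) = w[i+1]'h := by
  obtain ⟨hmem, hmin⟩ := hw
  have hi : i < w.length := Nat.lt_of_succ_lt h
  have ha := letterCases x₀ Y (Finset.mem_coe.1 (hmem _ (w.getElem_mem hi))) h1
  have hb := letterCases x₀ Y (Finset.mem_coe.1 (hmem _ (w.getElem_mem h))) h2
  by_contra hne
  have hab : w[i] * w[i+1] = 1 := by
    rcases ha with ha | ha <;> rcases hb with hb | hb <;> rw [ha, hb] at hne ⊢ <;>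
      first
      | exact absurd rfl hne
      | simp
  have hmem' : ∀ a ∈ w.take i ++ w.drop (i+2),
      a ∈ ((insert x₀ (insert x₀⁻¹ Y) : Finset G) : Set G) := by
    intro a haw
    rcases List.mem_append.1 haw with h' | h'
    · exact hmem a ((w.take_sublist i).mem h')
    · exact hmem a ((w.drop_sublist (i+2)).mem h')
  have hdrop : w.drop i = w[i] :: w[i+1] :: w.drop (i+2) := by
    rw [List.drop_eq_getElem_cons hi, List.drop_eq_getElem_cons h]
  have key : w[i] * (w[i+1] * (w.drop (i+2)).prod) = (w.drop (i+2)).prod := by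
    rw [← mul_assoc, hab, one_mul]
  have hprod : (w.take i ++ w.drop (i+2)).prod = w.prod := by
    conv_rhs => rw [← List.take_append_drop i w, hdrop]
    rw [List.prod_append, List.prod_append, List.prod_cons, List.prod_cons, key]
  have hle := hmin _ hmem' hprod
  rw [List.length_append, List.length_take, List.length_drop] at hle
  omega

lemma code_inj (x₀ : G) (Y : Finset G) (k : ℕ) {w w' : List G}
    (hw : IsGeodesicWord ((insert x₀ (insert x₀⁻¹ Y) : Finset G) : Set G) w)
    (hw' : IsGeodesicWord ((insert x₀ (insert x₀⁻¹ Y) : Finset G) : Set G) w')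
    (hFk : (Fw Y w).length ≤ k) (hFk' : (Fw Y w').length ≤ k)
    (h : code x₀ Y k w = code x₀ Y k w') : w = w' := by
  have h1 : w.length = w'.length := congrArg Prod.fst h
  have h2 : (fun i : Fin k => (Fw Y w)[(i : ℕ)]?) = (fun i : Fin k => (Fw Y w')[(i : ℕ)]?) :=
    congrArg (fun c => c.2.1) h
  have h3 : (fun i : Fin (k+1) => decide (w.getD (startIdx Y w i) 1 = x₀)) =
      (fun i : Fin (k+1) => decide (w'.getD (startIdx Y w' i) 1 = x₀)) :=
    congrArg (fun c => c.2.2) h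
  have hF : Fw Y w = Fw Y w' := by
    apply List.ext_getElem?
    intro i
    by_cases hik : i < k
    · exact congrFun h2 ⟨i, hik⟩
    · rw [List.getElem?_eq_none (by omega), List.getElem?_eq_none (by omega)]
  have hYpos : ∀ p (hp : p < w.length), w[p] ∈ Y → w'[p]'(h1 ▸ hp) = w[p] := by
    intro p hp hpy
    have hmF : (p, w[p]) ∈ Fw Y w :=
      mem_Fw.2 ⟨List.getElem?_eq_getElem hp, hpy⟩
    rw [hF] at hmF
    have hg := (mem_Fw.1 hmF).1
    rw [List.getElem?_eq_getElem (h1 ▸ hp)] at hg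
    exact Option.some_injective _ hg
  have hNY : ∀ p (hp : p < w.length), w[p] ∉ Y → w'[p]'(h1 ▸ hp) ∉ Y := by
    intro p hp hny hcon
    apply hny
    have hmF : (p, w'[p]'(h1 ▸ hp)) ∈ Fw Y w' :=
      mem_Fw.2 ⟨List.getElem?_eq_getElem (h1 ▸ hp), hcon⟩
    rw [← hF] at hmF
    have hg := (mem_Fw.1 hmF).1
    rw [List.getElem?_eq_getElem hp] at hg
    rw [Option.some_injective _ hg]
    exact hcon
  have hmemw := hw.1
  have hmemw' := hw'.1
  have main : ∀ p (hp : p < w.length), w[p] = w'[p]'(h1 ▸ hp) := by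
    intro p
    induction p with
    | zero =>
      intro hp
      by_cases h0 : w[0] ∈ Y
      · exact (hYpos 0 hp h0).symm
      · have e : decide (w.getD 0 1 = x₀) = decide (w'.getD 0 1 = x₀) :=
          congrFun h3 ⟨0, Nat.succ_pos k⟩
        simp only [List.getD_eq_getElem?_getD, List.getElem?_eq_getElem hp,
          List.getElem?_eq_getElem (h1 ▸ hp), Option.getD_some] at e
        exact letter_det x₀ Y (Finset.mem_coe.1 (hmemw _ (w.getElem_mem hp))) h0
          (Finset.mem_coe.1 (hmemw' _ (w'.getElem_mem (h1 ▸ hp)))) (hNY 0 hp h0) e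
    | succ p ih =>
      intro hp
      have hp' : p < w.length := Nat.lt_of_succ_lt hp
      by_cases hy : w[p+1] ∈ Y
      · exact (hYpos _ hp hy).symm
      · have hy' : w'[p+1]'(h1 ▸ hp) ∉ Y := hNY _ hp hy
        by_cases hpy : w[p] ∈ Y
        · have hmF : (p, w[p]) ∈ Fw Y w :=
            mem_Fw.2 ⟨List.getElem?_eq_getElem hp', hpy⟩
          obtain ⟨i, hFi⟩ := List.mem_iff_get.1 hmF
          have hik : (i : ℕ) < k := lt_of_lt_of_le i.isLt hFk
          have e : decide (w.getD (startIdx Y w ((i : ℕ) + 1)) 1 = x₀) =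
              decide (w'.getD (startIdx Y w' ((i : ℕ) + 1)) 1 = x₀) :=
            congrFun h3 ⟨(i : ℕ) + 1, by omega⟩
          have hFi2 : (Fw Y w)[(i : ℕ)] = (p, w[p]) := by
            rw [← List.get_eq_getElem]; exact hFi
          have hs : startIdx Y w ((i : ℕ) + 1) = p + 1 := by
            simp [startIdx, List.getElem?_eq_getElem i.isLt, hFi2]
          have hs' : startIdx Y w' ((i : ℕ) + 1) = p + 1 := by
            have := hs
            simp only [startIdx] at this ⊢
            rw [← hF, ← h1]
            exact this
          rw [hs, hs'] at e
          simp only [List.getD_eq_getElem?_getD, List.getElem?_eq_getElem hp,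
            List.getElem?_eq_getElem (h1 ▸ hp), Option.getD_some] at e
          exact letter_det x₀ Y (Finset.mem_coe.1 (hmemw _ (w.getElem_mem hp))) hy
            (Finset.mem_coe.1 (hmemw' _ (w'.getElem_mem (h1 ▸ hp)))) hy' e
        · have e1 := geo_adj x₀ Y hw hp hpy hy
          have e2 := geo_adj x₀ Y hw' (h1 ▸ hp) (hNY p hp' hpy) hy'
          rw [← e1, ← e2]
          exact ih hp'
  exact List.ext_getElem h1 fun i hi1 hi2 => main i hi1

end Aux

/-- Dominating generator lemma: if every geodesic over X = {x₀, x₀⁻¹} ∪ Y contains at most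
k letters from Y, then the geodesic growth is polynomial of degree k+1. -/
theorem dominating_generator_polynomial_growth {G : Type*} [Group G] [DecidableEq G]
    (x₀ : G) (Y : Finset G) (hx : x₀ ∉ Y) (hx' : x₀⁻¹ ∉ Y)
    (hsym : ∀ g ∈ insert x₀ (insert x₀⁻¹ Y), g⁻¹ ∈ insert x₀ (insert x₀⁻¹ Y))
    (hgen : Subgroup.closure ((insert x₀ (insert x₀⁻¹ Y) : Finset G) : Set G) = ⊤)
    (k : ℕ)
    (hk : ∀ w : List G,
      IsGeodesicWord ((insert x₀ (insert x₀⁻¹ Y) : Finset G) : Set G) w →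
        w.countP (fun g => decide (g ∈ Y)) ≤ k) :
    ∃ C : ℕ, ∀ n : ℕ, 1 ≤ n →
      geodesicGrowth ((insert x₀ (insert x₀⁻¹ Y) : Finset G) : Set G) n ≤
        C * n ^ (k + 1) := by
  classical
  refine ⟨2 * (Y.card + 1) ^ k * 2 ^ (k + 1), fun n hn => ?_⟩
  set S := {w : List G | IsGeodesicWord ((insert x₀ (insert x₀⁻¹ Y) : Finset G) : Set G) w ∧
    w.length ≤ n} with hS
  set T : Finset (ℕ × (Fin k → Option (ℕ × G)) × (Fin (k+1) → Bool)) :=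
    Finset.range (n+1) ×ˢ
      (Fintype.piFinset fun _ : Fin k =>
        insert none (((Finset.range n) ×ˢ Y).image some)) ×ˢ Finset.univ with hT
  have hsub : ∀ w ∈ S, code x₀ Y k w ∈ (T : Set _) := by
    intro w hw
    obtain ⟨hg, hlen⟩ := hw
    rw [Finset.mem_coe, hT, Finset.mem_product, Finset.mem_product]
    refine ⟨by simpa [code] using Nat.lt_succ_of_le hlen, ?_, Finset.mem_univ _⟩
    rw [Fintype.mem_piFinset]
    intro i
    rcases hc : (Fw Y w)[(i : ℕ)]? with _ | pa
    · simp only [code]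
      rw [hc]
      exact Finset.mem_insert_self _ _
    · have hpm : pa ∈ Fw Y w := List.mem_of_getElem? hc
      obtain ⟨p, a⟩ := pa
      obtain ⟨hpa, haY⟩ := mem_Fw.1 hpm
      have hplt : p < w.length := by
        rcases List.getElem?_eq_some_iff.1 hpa with ⟨hlt, _⟩
        exact hlt
      simp only [code, hc, Finset.mem_insert, Finset.mem_image, Finset.mem_product,
        Finset.mem_range]
      exact Or.inr ⟨(p, a), ⟨lt_of_lt_of_le hplt hlen, haY⟩, rfl⟩
  have hinj : Set.InjOn (code x₀ Y k) S := by
    intro w hw w2 hw2 he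
    refine code_inj x₀ Y k hw.1 hw2.1 ?_ ?_ he
    · rw [Fw_length]; exact hk w hw.1
    · rw [Fw_length]; exact hk w2 hw2.1
  have hle := Set.ncard_le_ncard_of_injOn _ hsub hinj T.finite_toSet
  rw [Set.ncard_coe_finset] at hle
  have hpi : (Fintype.piFinset fun _ : Fin k =>
      insert none (((Finset.range n) ×ˢ Y).image some)).card = (n * Y.card + 1) ^ k := by
    rw [Fintype.card_piFinset, Finset.prod_const, Finset.card_insert_of_notMem (by simp),
      Finset.card_image_of_injective _ (Option.some_injective _),
      Finset.card_product, Finset.card_range]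
    simp
  have huniv : (Finset.univ : Finset (Fin (k+1) → Bool)).card = 2 ^ (k+1) := by
    simp
  have hcard : T.card = (n+1) * (((n * Y.card + 1) ^ k) * 2 ^ (k+1)) := by
    rw [hT, Finset.card_product, Finset.card_product, Finset.card_range, hpi, huniv]
  calc geodesicGrowth ((insert x₀ (insert x₀⁻¹ Y) : Finset G) : Set G) n
      = S.ncard := rfl
    _ ≤ T.card := hle
    _ = (n+1) * (((n * Y.card + 1) ^ k) * 2 ^ (k+1)) := hcard
    _ ≤ (2*n) * ((((Y.card + 1) * n) ^ k) * 2 ^ (k+1)) := by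
        gcongr <;> nlinarith
    _ = 2 * (Y.card + 1) ^ k * 2 ^ (k + 1) * n ^ (k + 1) := by rw [mul_pow]; ring
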